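/- arXiv:math/0702736 — 3 statements merged into one kernel-verified Lean document; each statement's English description precedes it below -/
import Mathlib

section
/- Let T be a tree (a connected acyclic graph) and let a, b be automorphisms of T such that a and b are each elliptic (each fixes some vertex) but have no common fixed vertex. Then the product a·b is hyperbolic, i.e., a·b fixes no vertex. -/
open SimpleGraph Walk

section Aux
variable {V : Type*} {G : SimpleGraph V}

private lemma getVert_map' {W : Type*} {G' : SimpleGraph W} (f : G →g G') {u v : V}
    (A : G.Walk u v) (i : ℕ) : (A.map f).getVert i = f (A.getVert i) := by
  induction A generalizing i with
  | nil => simp [Walk.getVert]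
  | cons h p ih => cases i <;> simp [Walk.map_cons, Walk.getVert, ih]

/-- In an acyclic graph, any path realizes the distance. -/
private lemma path_length_eq_dist (hac : G.IsAcyclic) {x y : V} {P : G.Walk x y}
    (hP : P.IsPath) : P.length = G.dist x y := by
  obtain ⟨Q, hQ, hQl⟩ := (Reachable.exists_path_of_dist ⟨P⟩)
  have h := hac.path_unique ⟨P, hP⟩ ⟨Q, hQ⟩
  rw [show P = Q from congrArg Subtype.val h, hQl]

/-- Two paths from a common vertex in a tree split as a common prefix followed by
disjoint continuations. -/
private lemma split_paths (hac : G.IsAcyclic) {p v : V} (A : G.Walk p v) :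
    ∀ {u : V} (B : G.Walk p u), A.IsPath → B.IsPath →
    ∃ (m : V) (A₁ : G.Walk p m) (A₂ : G.Walk m v) (B₂ : G.Walk m u),
      A = A₁.append A₂ ∧ B = A₁.append B₂ ∧ (A₂.reverse.append B₂).IsPath := by
  classical
  induction A with
  | nil =>
    intro u B hA hB
    exact ⟨_, .nil, .nil, B, rfl, rfl, by simpa⟩
  | @cons p p' v h A' ih =>
    intro u B hA hB
    cases B with
    | nil =>
      exact ⟨p, .nil, Walk.cons h A', .nil, rfl, rfl, by simpa using hA.reverse⟩
    | @cons _ p'' _ h' B' =>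
      by_cases hpp : p' = p''
      · subst hpp
        obtain ⟨m, A₁, A₂, B₂, e1, e2, hP⟩ := ih B' hA.of_cons hB.of_cons
        exact ⟨m, Walk.cons h A₁, A₂, B₂, by rw [e1, Walk.cons_append],
          by rw [e2, Walk.cons_append], hP⟩
      · -- the continuations are disjoint except at p
        have hpA : p ∉ A'.support := (Walk.cons_isPath_iff _ _ |>.mp hA).2
        have hpB : p ∉ B'.support := (Walk.cons_isPath_iff _ _ |>.mp hB).2
        have hdisj : ∀ x, x ∈ (Walk.cons h A').support → x ∈ (Walk.cons h' B').support → x = p := by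
          intro x hx1 hx2
          by_contra hxp
          rw [Walk.support_cons, List.mem_cons] at hx1 hx2
          have hx1' : x ∈ A'.support := hx1.resolve_left hxp
          have hx2' : x ∈ B'.support := hx2.resolve_left hxp
          have hW1 : (Walk.cons h (A'.takeUntil x hx1')).IsPath :=
            (hA.of_cons.takeUntil hx1').cons
              (fun hp => hpA (A'.support_takeUntil_subset hx1' hp))
          have hW2 : (Walk.cons h' (B'.takeUntil x hx2')).IsPath :=
            (hB.of_cons.takeUntil hx2').cons
              (fun hp => hpB (B'.support_takeUntil_subset hx2' hp))
          have heq := hac.path_unique ⟨_, hW1⟩ ⟨_, hW2⟩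
          have heq' : (Walk.cons h (A'.takeUntil x hx1')) =
              (Walk.cons h' (B'.takeUntil x hx2')) := congrArg Subtype.val heq
          have : p' = p'' := by
            have := congrArg (fun w => Walk.getVert w 1) heq'
            simpa [Walk.getVert_cons] using this
          exact hpp this
        refine ⟨p, .nil, Walk.cons h A', Walk.cons h' B', rfl, rfl, ?_⟩
        rw [Walk.isPath_def, Walk.support_append]
        refine List.Nodup.append hA.reverse.support_nodup ?_ ?_
        · rw [Walk.support_cons]
          exact hB.of_cons.support_nodup
        · intro x hx1 hx2
          rw [Walk.support_reverse, List.mem_reverse] at hx1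
          rw [Walk.support_cons] at hx2
          have := hdisj x hx1 (by rw [Walk.support_cons]; exact List.mem_cons_of_mem _ hx2)
          subst this
          exact hpB hx2

/-- If an automorphism of a tree fixes `p`, then the midpoint of `v` and `g v` is a
fixed vertex. -/
private lemma median_fixed (hconn : G.Connected) (hac : G.IsAcyclic) (g : G ≃g G)
    {p : V} (hp : g p = p) (v : V) :
    ∃ m, g m = m ∧ G.dist v m = G.dist (g v) m ∧
      G.dist v m + G.dist m (g v) = G.dist v (g v) := by
  classical
  obtain ⟨A, hA, -⟩ := (hconn p v).exists_path_of_dist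
  set B : G.Walk p (g v) := (A.map g.toHom).copy hp rfl with hBdef
  have hB : B.IsPath := by
    rw [hBdef, Walk.isPath_copy]
    exact Walk.map_isPath_of_injective g.injective hA
  obtain ⟨m, A₁, A₂, B₂, e1, e2, hP⟩ := split_paths hac A B hA hB
  have h1 : A.getVert A₁.length = m := by
    rw [e1, Walk.getVert_append]
    simp
  have h2 : B.getVert A₁.length = m := by
    rw [e2, Walk.getVert_append]
    simp
  have hm : g m = m := by
    calc g m = g (A.getVert A₁.length) := by rw [h1]
    _ = (A.map g.toHom).getVert A₁.length := (getVert_map' g.toHom A _).symm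
    _ = B.getVert A₁.length := by rw [hBdef, Walk.getVert_copy]
    _ = m := h2
  have hlen : A₂.length = B₂.length := by
    have hAB : A.length = B.length := by
      rw [hBdef]; simp
    rw [e1, e2, Walk.length_append, Walk.length_append] at hAB
    omega
  have d1 : G.dist v m = A₂.length := by
    rw [← path_length_eq_dist hac hP.of_append_left, Walk.length_reverse]
  have d2 : G.dist m (g v) = B₂.length := path_length_eq_dist hac hP.of_append_right |>.symm
  have d3 : G.dist v (g v) = A₂.length + B₂.length := by
    rw [← path_length_eq_dist hac hP, Walk.length_append, Walk.length_reverse]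
  have d4 : G.dist (g v) m = B₂.length := by rw [G.dist_comm, d2]
  exact ⟨m, hm, by omega, by omega⟩

/-- Midpoints on geodesics in trees are unique. -/
private lemma tree_midpoint_unique (hconn : G.Connected) (hac : G.IsAcyclic) {v u m n : V}
    (h1 : G.dist v m + G.dist m u = G.dist v u)
    (h2 : G.dist v n + G.dist n u = G.dist v u)
    (h3 : G.dist v m = G.dist v n) : m = n := by
  obtain ⟨P1, hP1, l1⟩ := (hconn v m).exists_path_of_dist
  obtain ⟨P2, hP2, l2⟩ := (hconn m u).exists_path_of_dist
  obtain ⟨Q1, hQ1, k1⟩ := (hconn v n).exists_path_of_dist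
  obtain ⟨Q2, hQ2, k2⟩ := (hconn n u).exists_path_of_dist
  have lW : (P1.append P2).length = G.dist v u := by
    rw [Walk.length_append, l1, l2, h1]
  have lX : (Q1.append Q2).length = G.dist v u := by
    rw [Walk.length_append, k1, k2, h2]
  have hW : (P1.append P2).IsPath := (P1.append P2).isPath_of_length_eq_dist lW
  have hX : (Q1.append Q2).IsPath := (Q1.append Q2).isPath_of_length_eq_dist lX
  have hWX : P1.append P2 = Q1.append Q2 :=
    congrArg Subtype.val (hac.path_unique ⟨_, hW⟩ ⟨_, hX⟩)
  have hm : (P1.append P2).getVert (G.dist v m) = m := by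
    rw [← l1, Walk.getVert_append]
    simp
  have hn : (Q1.append Q2).getVert (G.dist v n) = n := by
    rw [← k1, Walk.getVert_append]
    simp
  rw [← hm, ← hn, hWX, h3]

end Aux

/-- If `a` and `b` are elliptic automorphisms of a tree (each fixes a vertex)
with no common fixed vertex, then the product `a·b` (first `a`, then `b`)
is hyperbolic, i.e. it fixes no vertex. -/
theorem elliptic_mul_elliptic_no_common_fixed_is_hyperbolic
    {V : Type*} (G : SimpleGraph V) (hconn : G.Connected) (hac : G.IsAcyclic)
    (a b : G ≃g G)
    (ha : ∃ v, a v = v) (hb : ∃ v, b v = v)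
    (hcommon : ¬ ∃ v, a v = v ∧ b v = v) :
    ∀ v : V, b (a v) ≠ v := by
  intro v hv
  obtain ⟨p, hp⟩ := ha
  obtain ⟨q, hq⟩ := hb
  obtain ⟨m, hm, hm1, hm2⟩ := median_fixed hconn hac a hp v
  obtain ⟨n, hn, hn1, hn2⟩ := median_fixed hconn hac b hq (a v)
  rw [hv] at hn1 hn2
  -- hm1 : dist v m = dist (a v) m, hm2 : dist v m + dist m (a v) = dist v (a v)
  -- hn1 : dist (a v) n = dist v n, hn2 : dist (a v) n + dist n v = dist (a v) v
  have hc1 : G.dist (a v) m = G.dist m (a v) := G.dist_comm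
  have hc2 : G.dist n v = G.dist v n := G.dist_comm
  have hc3 : G.dist (a v) v = G.dist v (a v) := G.dist_comm
  have hc4 : G.dist n (a v) = G.dist (a v) n := G.dist_comm
  have h3 : G.dist v m = G.dist v n := by omega
  have hn2' : G.dist v n + G.dist n (a v) = G.dist v (a v) := by omega
  have hmn : m = n := tree_midpoint_unique hconn hac hm2 hn2' h3
  exact hcommon ⟨m, hm, hmn ▸ hn⟩
end

section
/- Let V be a finite rooted tree in which the root has d ≥ 3 children, and let x, y be two distinct children of the root. Let X be the subgroup of Aut(V) consisting of automorphisms fixing pointwise all descendants of x (including x), and Y the subgroup fixing pointwise all descendants of y (including y). If V is spherically homogeneous (all vertices at the same level have the same number of children), then X and Y together generate Aut(V). -/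
/-- The vertices of the finite spherically homogeneous rooted tree
`T(e 0, …, e (L-1))`: sequences `s` of length at most `L` whose `i`-th entry
is a child-index smaller than `e i`.  The root is the empty sequence and the
children of a vertex `s` of level `< L` are the vertices `s ++ [k]`. -/
def RVtx (e : ℕ → ℕ) (L : ℕ) : Type :=
  {s : List ℕ // s.length ≤ L ∧ ∀ i, i < s.length → s.getD i 0 < e i}

/-- The automorphism group of the rooted tree `T(e 0, …, e (L-1))`:
permutations of the vertices preserving the descendant (prefix) relation. -/
def rootedAut (e : ℕ → ℕ) (L : ℕ) : Subgroup (Equiv.Perm (RVtx e L)) where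
  carrier := {σ | ∀ v w : RVtx e L, v.1 <+: w.1 ↔ (σ v).1 <+: (σ w).1}
  one_mem' := by intro v w; simp
  mul_mem' := by
    intro a b ha hb v w
    exact (hb v w).trans (ha (b v) (b w))
  inv_mem' := by
    intro a ha v w
    have h := ha (a⁻¹ v) (a⁻¹ w)
    simpa using h.symm

namespace TwoGen

variable {e : ℕ → ℕ} {L : ℕ}

theorem _root_.Equiv.Perm.apply_inv_self {α : Type*} (f : Equiv.Perm α) (x : α) : f (f⁻¹ x) = x :=
  f.apply_symm_apply x

theorem _root_.Equiv.Perm.inv_apply_self {α : Type*} (f : Equiv.Perm α) (x : α) : f⁻¹ (f x) = x :=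
  f.symm_apply_apply x

/-! ### swap automorphisms -/

def swapList (u v : ℕ) : List ℕ → List ℕ
  | [] => []
  | k :: t => Equiv.swap u v k :: t

lemma swapList_length (u v : ℕ) (l : List ℕ) : (swapList u v l).length = l.length := by
  cases l <;> rfl

lemma swapList_involutive (u v : ℕ) (l : List ℕ) : swapList u v (swapList u v l) = l := by
  cases l with
  | nil => rfl
  | cons k t => simp [swapList, Equiv.swap_apply_self]

lemma swapList_take (u v n : ℕ) (l : List ℕ) :
    (swapList u v l).take n = swapList u v (l.take n) := by
  cases l with
  | nil => simp [swapList]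
  | cons k t =>
    cases n with
    | zero => rfl
    | succ m => simp [swapList]

lemma swapList_prefix (u v : ℕ) (s t : List ℕ) :
    s <+: t ↔ swapList u v s <+: swapList u v t := by
  rw [List.prefix_iff_eq_take, List.prefix_iff_eq_take, swapList_length, swapList_take]
  constructor
  · intro h; exact congrArg (swapList u v) h
  · intro h
    have := congrArg (swapList u v) h
    simpa [swapList_involutive] using this

lemma swap_lt {u v k n : ℕ} (hu : u < n) (hv : v < n) (hk : k < n) :
    Equiv.swap u v k < n := by
  rw [Equiv.swap_apply_def]
  split_ifs <;> assumption

lemma swapList_valid (u v : ℕ) (hu : u < e 0) (hv : v < e 0) (l : List ℕ)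
    (h : ∀ i, i < l.length → l.getD i 0 < e i) :
    ∀ i, i < (swapList u v l).length → (swapList u v l).getD i 0 < e i := by
  cases l with
  | nil => intro i hi; simp [swapList] at hi
  | cons k t =>
    intro i hi
    rw [swapList_length] at hi
    cases i with
    | zero => exact swap_lt hu hv (h 0 (by simp))
    | succ j => simpa [swapList] using h (j + 1) hi

def swapAct (u v : ℕ) (hu : u < e 0) (hv : v < e 0) : Equiv.Perm (RVtx e L) where
  toFun s := ⟨swapList u v s.1, by rw [swapList_length]; exact s.2.1,
    swapList_valid u v hu hv s.1 s.2.2⟩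
  invFun s := ⟨swapList u v s.1, by rw [swapList_length]; exact s.2.1,
    swapList_valid u v hu hv s.1 s.2.2⟩
  left_inv s := Subtype.ext (swapList_involutive u v s.1)
  right_inv s := Subtype.ext (swapList_involutive u v s.1)

lemma swapAct_apply (u v : ℕ) (hu : u < e 0) (hv : v < e 0) (s : RVtx e L) :
    ((swapAct u v hu hv) s).1 = swapList u v s.1 := rfl

lemma swapAct_mem (u v : ℕ) (hu : u < e 0) (hv : v < e 0) :
    (swapAct u v hu hv : Equiv.Perm (RVtx e L)) ∈ rootedAut e L := by
  intro s t
  exact swapList_prefix u v s.1 t.1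

lemma swapAct_fixes {u v a : ℕ} (hu : u < e 0) (hv : v < e 0)
    (hau : a ≠ u) (hav : a ≠ v) (z : RVtx e L) (hz : [a] <+: z.1) :
    (swapAct u v hu hv) z = z := by
  obtain ⟨t, ht⟩ := hz
  apply Subtype.ext
  show swapList u v z.1 = z.1
  rw [← ht]
  simp [swapList, Equiv.swap_apply_of_ne_of_ne hau hav]

/-! ### restriction of an automorphism to a subtree -/

def restrictPerm (x : RVtx e L) (σ : Equiv.Perm (RVtx e L))
    (hσ : ∀ z, x.1 <+: z.1 ↔ x.1 <+: (σ z).1) : Equiv.Perm (RVtx e L) where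
  toFun z := if x.1 <+: z.1 then σ z else z
  invFun z := if x.1 <+: z.1 then σ⁻¹ z else z
  left_inv z := by
    by_cases h : x.1 <+: z.1
    · simp [h, (hσ z).mp h]
    · simp [h]
  right_inv z := by
    by_cases h : x.1 <+: z.1
    · have h2 : x.1 <+: (σ⁻¹ z).1 := by
        have := hσ (σ⁻¹ z)
        rw [Equiv.Perm.apply_inv_self] at this
        exact this.mpr h
      simp [h, h2, show x.1 <+: (σ.symm z).1 from h2]
    · simp [h]

lemma restrictPerm_apply (x : RVtx e L) (σ : Equiv.Perm (RVtx e L))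
    (hσ : ∀ z, x.1 <+: z.1 ↔ x.1 <+: (σ z).1) (z : RVtx e L) :
    (restrictPerm x σ hσ) z = if x.1 <+: z.1 then σ z else z := rfl

lemma restrictPerm_inv_apply (x : RVtx e L) (σ : Equiv.Perm (RVtx e L))
    (hσ : ∀ z, x.1 <+: z.1 ↔ x.1 <+: (σ z).1) (z : RVtx e L) :
    (restrictPerm x σ hσ)⁻¹ z = if x.1 <+: z.1 then σ⁻¹ z else z := rfl

lemma restrictPerm_mem (x : RVtx e L) (σ : Equiv.Perm (RVtx e L))
    (hσmem : σ ∈ rootedAut e L)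
    (hσ : ∀ z, x.1 <+: z.1 ↔ x.1 <+: (σ z).1) :
    restrictPerm x σ hσ ∈ rootedAut e L := by
  intro v w
  rw [restrictPerm_apply, restrictPerm_apply]
  by_cases hv : x.1 <+: v.1 <;> by_cases hw : x.1 <+: w.1
  · simp only [hv, hw, if_pos]
    exact hσmem v w
  · -- v in subtree, w not : both sides false
    simp only [hv, hw, if_pos, if_neg]
    constructor
    · intro h; exact absurd (hv.trans h) hw
    · intro h; exact absurd (((hσ v).mp hv).trans h) hw
  · -- v not, w in subtree : both sides ↔ v <+: x
    simp only [hv, hw, if_neg, if_pos]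
    constructor
    · intro h
      rcases List.prefix_or_prefix_of_prefix h hw with h' | h'
      · exact h'.trans ((hσ w).mp hw)
      · exact absurd h' hv
    · intro h
      rcases List.prefix_or_prefix_of_prefix h ((hσ w).mp hw) with h' | h'
      · exact h'.trans hw
      · exact absurd h' hv
  · simp [hv, hw]

/-! ### level preservation facts -/

lemma apply_root {σ : Equiv.Perm (RVtx e L)} (hσ : σ ∈ rootedAut e L)
    (r : RVtx e L) (hr : r.1 = []) : σ r = r := by
  have h := (hσ r (σ⁻¹ r)).mp (by rw [hr]; exact List.nil_prefix)
  rw [Equiv.Perm.apply_inv_self, hr] at h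
  exact Subtype.ext ((List.prefix_nil.mp h).trans hr.symm)

lemma prefix_singleton {l : List ℕ} {a : ℕ} (h : l <+: [a]) : l = [] ∨ l = [a] := by
  cases l with
  | nil => exact Or.inl rfl
  | cons k t =>
    obtain ⟨s, hs⟩ := h
    simp only [List.cons_append, List.cons.injEq] at hs
    obtain ⟨rfl, hs⟩ := hs
    rcases List.append_eq_nil_iff.mp hs with ⟨rfl, -⟩
    exact Or.inr rfl

lemma level_one {σ : Equiv.Perm (RVtx e L)} (hσ : σ ∈ rootedAut e L)
    (x : RVtx e L) (a : ℕ) (hx : x.1 = [a]) : (σ x).1.length = 1 := by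
  obtain ⟨r, hr⟩ : ∃ r : RVtx e L, r.1 = [] := ⟨⟨[], by simp⟩, rfl⟩
  have hroot := apply_root hσ r hr
  have h1 : (σ x).1 ≠ [] := by
    intro h
    have hx' : σ x = σ r := by rw [hroot]; exact Subtype.ext (h.trans hr.symm)
    have := σ.injective hx'
    replace this := congrArg Subtype.val this; rw [hx, hr] at this
    simp at this
  rcases hl : (σ x).1 with _ | ⟨b, _ | ⟨c, rest⟩⟩
  · exact absurd hl h1
  · rfl
  · exfalso
    have hbe : b < e 0 := by
      have := (σ x).2.2 0 (by rw [hl]; simp)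
      rwa [hl] at this
    obtain ⟨w, hwval⟩ : ∃ w : RVtx e L, w.1 = [b] := by
      refine ⟨⟨[b], ?_, ?_⟩, rfl⟩
      · have := (σ x).2.1
        rw [hl] at this
        simp only [List.length_cons, List.length] at this ⊢
        omega
      · intro i hi
        simp only [List.length_cons, List.length_nil] at hi
        interval_cases i
        simpa using hbe
    have hwpre : w.1 <+: (σ x).1 := by rw [hwval, hl]; exact ⟨c :: rest, rfl⟩
    have hinv := ((rootedAut e L).inv_mem hσ w (σ x)).mp hwpre
    rw [Equiv.Perm.inv_apply_self, hx] at hinv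
    rcases prefix_singleton hinv with h' | h'
    · have h2 : w = r := by
        have h3 : σ⁻¹ w = r := Subtype.ext (h'.trans hr.symm)
        rw [← Equiv.Perm.apply_inv_self σ w, h3, hroot]
      rw [h2, hr] at hwval
      simp at hwval
    · have hwx : σ⁻¹ w = x := Subtype.ext (h'.trans hx.symm)
      have h2 : w = σ x := by rw [← hwx, Equiv.Perm.apply_inv_self]
      rw [h2, hl] at hwval
      simp at hwval

/-! ### main decomposition lemma -/

lemma mem_closure_of_fix (S : Set (Equiv.Perm (RVtx e L)))
    (x y : RVtx e L) (a c : ℕ) (hxa : x.1 = [a]) (hyc : y.1 = [c]) (hac : a ≠ c)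
    (hY : ∀ σ : Equiv.Perm (RVtx e L),
      σ ∈ rootedAut e L → (∀ z : RVtx e L, y.1 <+: z.1 → σ z = z) → σ ∈ S)
    (hX : ∀ σ : Equiv.Perm (RVtx e L),
      σ ∈ rootedAut e L → (∀ z : RVtx e L, x.1 <+: z.1 → σ z = z) → σ ∈ S)
    (σ : Equiv.Perm (RVtx e L)) (hσ : σ ∈ rootedAut e L) (hfix : σ x = x) :
    σ ∈ Subgroup.closure S := by
  have hinv : ∀ z, x.1 <+: z.1 ↔ x.1 <+: (σ z).1 := by
    intro z
    have := hσ x z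
    rwa [hfix] at this
  set τ := restrictPerm x σ hinv with hτ
  have hτmem : τ ∈ rootedAut e L := restrictPerm_mem x σ hσ hinv
  have hτS : τ ∈ S := by
    apply hY τ hτmem
    intro z hz
    rw [hτ, restrictPerm_apply]
    rw [if_neg]
    intro hxz
    rw [hxa] at hxz
    rw [hyc] at hz
    obtain ⟨t, ht⟩ := hxz
    obtain ⟨t', ht'⟩ := hz
    rw [← ht'] at ht
    simp only [List.cons_append, List.nil_append, List.cons.injEq] at ht
    exact hac ht.1
  have hρS : σ * τ⁻¹ ∈ S := by
    apply hX (σ * τ⁻¹) ((rootedAut e L).mul_mem hσ ((rootedAut e L).inv_mem hτmem))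
    intro z hz
    rw [Equiv.Perm.mul_apply, hτ, restrictPerm_inv_apply, if_pos hz,
      Equiv.Perm.apply_inv_self]
  have : σ = (σ * τ⁻¹) * τ := by group
  rw [this]
  exact Subgroup.mul_mem _ (Subgroup.subset_closure hρS) (Subgroup.subset_closure hτS)

end TwoGen

open TwoGen in
/-- Lemma `techno`: in the finite spherically homogeneous rooted tree
`V = T(e 0, …, e (L-1))` with `e 0 ≥ 3`, if `x` and `y` are distinct level-one
vertices, then the subgroup of automorphisms fixing pointwise `x` and all its
descendants together with the subgroup fixing pointwise `y` and all its
descendants generate the full automorphism group `Aut(V)`. -/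
theorem two_pointwise_stabilizers_generate
    (L : ℕ) (e : ℕ → ℕ) (hL : 1 ≤ L) (he : ∀ i, i < L → 1 ≤ e i)
    (he0 : 3 ≤ e 0)
    (x y : RVtx e L) (hx : x.1.length = 1) (hy : y.1.length = 1) (hxy : x ≠ y) :
    Subgroup.closure
        ({σ : Equiv.Perm (RVtx e L) |
            σ ∈ rootedAut e L ∧ ∀ z : RVtx e L, x.1 <+: z.1 → σ z = z} ∪
         {σ : Equiv.Perm (RVtx e L) |
            σ ∈ rootedAut e L ∧ ∀ z : RVtx e L, y.1 <+: z.1 → σ z = z})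
      = rootedAut e L := by
  set S : Set (Equiv.Perm (RVtx e L)) :=
      ({σ : Equiv.Perm (RVtx e L) |
            σ ∈ rootedAut e L ∧ ∀ z : RVtx e L, x.1 <+: z.1 → σ z = z} ∪
         {σ : Equiv.Perm (RVtx e L) |
            σ ∈ rootedAut e L ∧ ∀ z : RVtx e L, y.1 <+: z.1 → σ z = z}) with hS
  have hXsub : ∀ σ : Equiv.Perm (RVtx e L),
      σ ∈ rootedAut e L → (∀ z : RVtx e L, x.1 <+: z.1 → σ z = z) → σ ∈ S :=
    fun σ h1 h2 => Or.inl ⟨h1, h2⟩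
  have hYsub : ∀ σ : Equiv.Perm (RVtx e L),
      σ ∈ rootedAut e L → (∀ z : RVtx e L, y.1 <+: z.1 → σ z = z) → σ ∈ S :=
    fun σ h1 h2 => Or.inr ⟨h1, h2⟩
  apply le_antisymm
  · rw [Subgroup.closure_le]
    rintro σ (⟨h, -⟩ | ⟨h, -⟩) <;> exact h
  · intro σ hσ
    obtain ⟨a, ha⟩ := List.length_eq_one_iff.mp hx
    obtain ⟨c, hc⟩ := List.length_eq_one_iff.mp hy
    have hae : a < e 0 := by
      have := x.2.2 0 (by rw [ha]; simp)
      rwa [ha] at this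
    have hce : c < e 0 := by
      have := y.2.2 0 (by rw [hc]; simp)
      rwa [hc] at this
    have hac : a ≠ c := by
      intro h
      apply hxy
      exact Subtype.ext (by rw [ha, hc, h])
    -- σ x has level 1
    obtain ⟨b, hb⟩ := List.length_eq_one_iff.mp (level_one hσ x a ha)
    have hbe : b < e 0 := by
      have := (σ x).2.2 0 (by rw [hb]; simp)
      rwa [hb] at this
    -- build ρ ∈ closure S with ρ x = σ x
    have key : ∃ ρ : Equiv.Perm (RVtx e L),
        ρ ∈ Subgroup.closure S ∧ ρ ∈ rootedAut e L ∧ ρ x = σ x := by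
      by_cases hba : b = a
      · refine ⟨1, Subgroup.one_mem _, (rootedAut e L).one_mem, ?_⟩
        simp only [Equiv.Perm.one_apply]
        exact (Subtype.ext (by rw [hb, hba, ha])).symm
      · by_cases hbc : b = c
        · -- need third point d
          obtain ⟨d, hde, hda, hdc⟩ : ∃ d, d < e 0 ∧ d ≠ a ∧ d ≠ c := by
            refine ⟨if 0 = a ∨ 0 = c then (if 1 = a ∨ 1 = c then 2 else 1) else 0,
              ?_, ?_, ?_⟩ <;> split_ifs <;> omega
          refine ⟨swapAct d c hde hce * swapAct a d hae hde, ?_, ?_, ?_⟩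
          · apply Subgroup.mul_mem
            · apply Subgroup.subset_closure
              apply hXsub _ (swapAct_mem d c hde hce)
              intro z hz
              rw [ha] at hz
              exact swapAct_fixes hde hce (Ne.symm hda) hac z hz
            · apply Subgroup.subset_closure
              apply hYsub _ (swapAct_mem a d hae hde)
              intro z hz
              rw [hc] at hz
              exact swapAct_fixes hae hde (Ne.symm hac) (Ne.symm hdc) z hz
          · exact (rootedAut e L).mul_mem (swapAct_mem d c hde hce) (swapAct_mem a d hae hde)
          · apply Subtype.ext
            rw [Equiv.Perm.mul_apply]
            have h1 : ((swapAct a d hae hde : Equiv.Perm (RVtx e L)) x).1 = [d] := by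
              rw [swapAct_apply, ha]
              simp [swapList, Equiv.swap_apply_left]
            rw [swapAct_apply, h1, hb, hbc]
            simp [swapList, Equiv.swap_apply_left]
        · -- swap a b works, it fixes the y-subtree
          refine ⟨swapAct a b hae hbe, ?_, swapAct_mem a b hae hbe, ?_⟩
          · apply Subgroup.subset_closure
            apply hYsub _ (swapAct_mem a b hae hbe)
            intro z hz
            rw [hc] at hz
            exact swapAct_fixes hae hbe (Ne.symm hac) (Ne.symm hbc) z hz
          · apply Subtype.ext
            rw [swapAct_apply, ha, hb]
            simp [swapList, Equiv.swap_apply_left]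
    obtain ⟨ρ, hρcl, hρmem, hρx⟩ := key
    have hfix : (ρ⁻¹ * σ) x = x := by
      rw [Equiv.Perm.mul_apply, ← hρx, Equiv.Perm.inv_apply_self]
    have hmem2 : (ρ⁻¹ * σ) ∈ rootedAut e L :=
      (rootedAut e L).mul_mem ((rootedAut e L).inv_mem hρmem) hσ
    have hcl2 : (ρ⁻¹ * σ) ∈ Subgroup.closure S :=
      mem_closure_of_fix S x y a c ha hc hac hYsub hXsub (ρ⁻¹ * σ) hmem2 hfix
    have : σ = ρ * (ρ⁻¹ * σ) := by group
    rw [this]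
    exact Subgroup.mul_mem _ hρcl hcl2
end

section
/- Let G be a topologically simple topological group, O < G an open subgroup, Γ < G a dense subgroup, and Λ = Γ ∩ O. Then the action of Γ on the coset space Γ/Λ by right translation is subnormal transitive: every nontrivial subnormal subgroup N of Γ acts transitively on Γ/Λ. -/
open scoped Pointwise

/-- `N` is subnormal in `Γ` (as subgroups of an ambient group `G`): there is a
finite chain `N = c n ⊴ c (n-1) ⊴ … ⊴ c 0 = Γ` of successive normal
subgroups. -/
def IsSubnormalIn {G : Type*} [Group G] (N Γ : Subgroup G) : Prop :=
  ∃ (n : ℕ) (c : ℕ → Subgroup G), c 0 = Γ ∧ c n = N ∧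
    ∀ i < n, c (i + 1) ≤ c i ∧
      ∀ x ∈ c i, ∀ h ∈ c (i + 1), x * h * x⁻¹ ∈ c (i + 1)

/-- Let `G` be a topologically simple topological group, `O` a proper open
subgroup, `Γ` a dense subgroup and `Λ = Γ ∩ O`.  Then the right coset action of
`Γ` on `Γ/Λ` is subnormal transitive: every nontrivial subnormal subgroup `N`
of `Γ` acts transitively, i.e. `N·Λ = Γ`. -/
theorem subnormal_transitive_of_dense
    {G : Type*} [Group G] [TopologicalSpace G] [IsTopologicalGroup G]
    (hsimple : ∀ H : Subgroup G, H.Normal → IsClosed (H : Set G) → H = ⊥ ∨ H = ⊤)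
    (O : Subgroup G) (hO : IsOpen (O : Set G)) (hOproper : O ≠ ⊤)
    (Γ : Subgroup G) (hΓ : Dense (Γ : Set G))
    (N : Subgroup G) (hNΓ : N ≤ Γ) (hsub : IsSubnormalIn N Γ) (hN : N ≠ ⊥) :
    (N : Set G) * ((Γ : Set G) ∩ (O : Set G)) = (Γ : Set G) := by
  obtain ⟨n, c, hc0, hcn, hstep⟩ := hsub
  -- chain monotonicity
  have hdown : ∀ d j, j + d ≤ n → c (j + d) ≤ c j := by
    intro d
    induction d with
    | zero => intro j _; simp
    | succ d ih =>
      intro j h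
      have h1 : c (j + 1 + d) ≤ c (j + 1) := ih (j + 1) (by omega)
      have h2 : c (j + 1) ≤ c j := (hstep j (by omega)).1
      have he : c (j + (d + 1)) = c (j + 1 + d) := congrArg c (by omega)
      rw [he]; exact le_trans h1 h2
  -- each member of the chain is dense
  have key : ∀ i, i ≤ n → Dense ((c i : Set G)) := by
    intro i
    induction i with
    | zero => intro _; rw [hc0]; exact hΓ
    | succ i ih =>
      intro hin
      have hi : i < n := hin
      have hdi := ih (le_of_lt hi)
      obtain ⟨hle, hconj⟩ := hstep i hi
      set K := (c (i + 1)).topologicalClosure with hK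
      have hKclosed : IsClosed (K : Set G) := (c (i + 1)).isClosed_topologicalClosure
      -- step 1: conjugates of elements of c (i+1) by arbitrary g lie in K
      have step1 : ∀ h ∈ c (i + 1), ∀ g : G, g * h * g⁻¹ ∈ K := by
        intro h hh g
        have hcont : Continuous fun g : G => g * h * g⁻¹ := by continuity
        have hclosed : IsClosed {g : G | g * h * g⁻¹ ∈ (K : Set G)} :=
          hKclosed.preimage hcont
        have hsub' : (c i : Set G) ⊆ {g : G | g * h * g⁻¹ ∈ (K : Set G)} := by
          intro x hx
          exact (c (i + 1)).le_topologicalClosure (hconj x hx h hh)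
        have hall : closure ((c i : Set G)) ⊆ {g : G | g * h * g⁻¹ ∈ (K : Set G)} :=
          closure_minimal hsub' hclosed
        have : g ∈ closure ((c i : Set G)) := by rw [hdi.closure_eq]; trivial
        exact hall this
      -- step 2: K is normal
      have hKnormal : K.Normal := by
        constructor
        intro k hk g
        have hcont : Continuous fun x : G => g * x * g⁻¹ := by continuity
        have hclosed : IsClosed {x : G | g * x * g⁻¹ ∈ (K : Set G)} :=
          hKclosed.preimage hcont
        have hsub' : (c (i + 1) : Set G) ⊆ {x : G | g * x * g⁻¹ ∈ (K : Set G)} := by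
          intro h hh; exact step1 h hh g
        have hk' : k ∈ closure ((c (i + 1)) : Set G) := hk
        have : closure ((c (i + 1)) : Set G) ⊆ {x : G | g * x * g⁻¹ ∈ (K : Set G)} :=
          closure_minimal hsub' hclosed
        exact this hk'
      rcases hsimple K hKnormal hKclosed with hbot | htop
      · exfalso
        apply hN
        have h1 : N ≤ c (i + 1) := by
          have := hdown (n - (i + 1)) (i + 1) (by omega)
          rw [show i + 1 + (n - (i + 1)) = n by omega, hcn] at this
          exact this
        have h2 : c (i + 1) ≤ K := (c (i + 1)).le_topologicalClosure
        rw [hbot] at h2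
        exact le_bot_iff.mp (h1.trans h2)
      · have : (K : Set G) = Set.univ := by rw [htop]; rfl
        have hcl : closure ((c (i + 1)) : Set G) = Set.univ := this
        rw [dense_iff_closure_eq]
        exact hcl
  have hNdense : Dense (N : Set G) := hcn ▸ key n le_rfl
  -- final coset argument
  ext γ
  constructor
  · rintro ⟨a, ha, b, ⟨hbΓ, _⟩, rfl⟩
    exact Γ.mul_mem (hNΓ ha) hbΓ
  · intro hγ
    have hUopen : IsOpen {g : G | γ⁻¹ * g ∈ (O : Set G)} :=
      hO.preimage (by continuity)
    have hUne : {g : G | γ⁻¹ * g ∈ (O : Set G)}.Nonempty :=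
      ⟨γ, by simp [O.one_mem]⟩
    obtain ⟨x, hxN, hxU⟩ := hNdense.exists_mem_open hUopen hUne
    refine ⟨x, hxN, x⁻¹ * γ, ⟨Γ.mul_mem (Γ.inv_mem (hNΓ hxN)) hγ, ?_⟩, by group⟩
    have : γ⁻¹ * x ∈ O := hxU
    simpa using O.inv_mem this
end
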